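/- Let A be the 4-dimensional F_p-algebra (p > 2 prime) with basis a, b, c, d, multiplication given by a² = c, ab = d, and all other basis products zero. The number of right ideals of A (including 0 and A) is 2p² + 3p + 5. -/

import Mathlib

/-- Multiplication of the 4-dimensional `F_p`-algebra `A⁰_{4,21}` with basis `a,b,c,d`,
`a² = c`, `ab = d`, all other basis products zero; an element `ra+sb+tc+ud` is the
quadruple `(r,s,t,u)`. -/
def mulA {p : ℕ} (x y : ZMod p × ZMod p × ZMod p × ZMod p) :
    ZMod p × ZMod p × ZMod p × ZMod p :=
  (0, 0, x.1 * y.1, x.1 * y.2.1)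

namespace Stmt5

variable (p : ℕ) [Fact p.Prime]

abbrev M := ZMod p × ZMod p × ZMod p × ZMod p

variable {p}

/-- span{(0,1,a,b)} -/
def L1 (a b : ZMod p) : Submodule (ZMod p) (M p) where
  carrier := {x | x.1 = 0 ∧ x.2.2.1 = a * x.2.1 ∧ x.2.2.2 = b * x.2.1}
  add_mem' := by
    rintro ⟨r,s,t,u⟩ ⟨r',s',t',u'⟩ ⟨h1,h2,h3⟩ ⟨g1,g2,g3⟩
    refine ⟨?_, ?_, ?_⟩ <;> simp_all <;> ring
  zero_mem' := by simp
  smul_mem' := by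
    rintro c ⟨r,s,t,u⟩ ⟨h1,h2,h3⟩
    refine ⟨?_, ?_, ?_⟩ <;> simp_all <;> ring

@[simp] lemma mem_L1 {a b : ZMod p} {x : M p} :
    x ∈ L1 a b ↔ x.1 = 0 ∧ x.2.2.1 = a * x.2.1 ∧ x.2.2.2 = b * x.2.1 := Iff.rfl

/-- span{(0,1,0,a),(0,0,1,b)} -/
def P1 (a b : ZMod p) : Submodule (ZMod p) (M p) where
  carrier := {x | x.1 = 0 ∧ x.2.2.2 = a * x.2.1 + b * x.2.2.1}
  add_mem' := by
    rintro ⟨r,s,t,u⟩ ⟨r',s',t',u'⟩ ⟨h1,h2⟩ ⟨g1,g2⟩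
    refine ⟨?_, ?_⟩ <;> simp_all <;> ring
  zero_mem' := by simp
  smul_mem' := by
    rintro c ⟨r,s,t,u⟩ ⟨h1,h2⟩
    refine ⟨?_, ?_⟩ <;> simp_all <;> ring

@[simp] lemma mem_P1 {a b : ZMod p} {x : M p} :
    x ∈ P1 a b ↔ x.1 = 0 ∧ x.2.2.2 = a * x.2.1 + b * x.2.2.1 := Iff.rfl

/-- span{(0,0,1,b)} -/
def L2 (b : ZMod p) : Submodule (ZMod p) (M p) where
  carrier := {x | x.1 = 0 ∧ x.2.1 = 0 ∧ x.2.2.2 = b * x.2.2.1}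
  add_mem' := by
    rintro ⟨r,s,t,u⟩ ⟨r',s',t',u'⟩ ⟨h1,h2,h3⟩ ⟨g1,g2,g3⟩
    refine ⟨?_, ?_, ?_⟩ <;> simp_all <;> ring
  zero_mem' := by simp
  smul_mem' := by
    rintro c ⟨r,s,t,u⟩ ⟨h1,h2,h3⟩
    refine ⟨?_, ?_, ?_⟩ <;> simp_all <;> ring

@[simp] lemma mem_L2 {b : ZMod p} {x : M p} :
    x ∈ L2 b ↔ x.1 = 0 ∧ x.2.1 = 0 ∧ x.2.2.2 = b * x.2.2.1 := Iff.rfl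

/-- span{(0,1,a,0),(0,0,0,1)} -/
def P2 (a : ZMod p) : Submodule (ZMod p) (M p) where
  carrier := {x | x.1 = 0 ∧ x.2.2.1 = a * x.2.1}
  add_mem' := by
    rintro ⟨r,s,t,u⟩ ⟨r',s',t',u'⟩ ⟨h1,h2⟩ ⟨g1,g2⟩
    refine ⟨?_, ?_⟩ <;> simp_all <;> ring
  zero_mem' := by simp
  smul_mem' := by
    rintro c ⟨r,s,t,u⟩ ⟨h1,h2⟩
    refine ⟨?_, ?_⟩ <;> simp_all <;> ring

@[simp] lemma mem_P2 {a : ZMod p} {x : M p} :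
    x ∈ P2 a ↔ x.1 = 0 ∧ x.2.2.1 = a * x.2.1 := Iff.rfl

/-- span{(1,s,0,0),(0,0,1,0),(0,0,0,1)} -/
def Q (s : ZMod p) : Submodule (ZMod p) (M p) where
  carrier := {x | x.2.1 = s * x.1}
  add_mem' := by
    rintro ⟨r,s',t,u⟩ ⟨r',s'',t',u'⟩ h1 h2
    simp_all [Set.mem_setOf_eq]; ring
  zero_mem' := by simp
  smul_mem' := by
    rintro c ⟨r,s',t,u⟩ h1
    simp_all [Set.mem_setOf_eq]; ring

@[simp] lemma mem_Q {s : ZMod p} {x : M p} :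
    x ∈ Q s ↔ x.2.1 = s * x.1 := Iff.rfl

/-- span{(0,0,0,1)} -/
def L3 : Submodule (ZMod p) (M p) where
  carrier := {x | x.1 = 0 ∧ x.2.1 = 0 ∧ x.2.2.1 = 0}
  add_mem' := by
    rintro ⟨r,s,t,u⟩ ⟨r',s',t',u'⟩ ⟨h1,h2,h3⟩ ⟨g1,g2,g3⟩
    refine ⟨?_, ?_, ?_⟩ <;> simp_all
  zero_mem' := by simp
  smul_mem' := by
    rintro c ⟨r,s,t,u⟩ ⟨h1,h2,h3⟩
    refine ⟨?_, ?_, ?_⟩ <;> simp_all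

@[simp] lemma mem_L3 {x : M p} :
    x ∈ (L3 : Submodule (ZMod p) (M p)) ↔ x.1 = 0 ∧ x.2.1 = 0 ∧ x.2.2.1 = 0 := Iff.rfl

/-- span{(0,0,1,0),(0,0,0,1)} -/
def P3 : Submodule (ZMod p) (M p) where
  carrier := {x | x.1 = 0 ∧ x.2.1 = 0}
  add_mem' := by
    rintro ⟨r,s,t,u⟩ ⟨r',s',t',u'⟩ ⟨h1,h2⟩ ⟨g1,g2⟩
    refine ⟨?_, ?_⟩ <;> simp_all
  zero_mem' := by simp
  smul_mem' := by
    rintro c ⟨r,s,t,u⟩ ⟨h1,h2⟩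
    refine ⟨?_, ?_⟩ <;> simp_all

@[simp] lemma mem_P3 {x : M p} :
    x ∈ (P3 : Submodule (ZMod p) (M p)) ↔ x.1 = 0 ∧ x.2.1 = 0 := Iff.rfl

/-- span{(0,1,0,0),(0,0,1,0),(0,0,0,1)} -/
def Pf : Submodule (ZMod p) (M p) where
  carrier := {x | x.1 = 0}
  add_mem' := by
    rintro ⟨r,s,t,u⟩ ⟨r',s',t',u'⟩ h1 h2
    simp_all [Set.mem_setOf_eq]
  zero_mem' := by simp
  smul_mem' := by
    rintro c ⟨r,s,t,u⟩ h1
    simp_all [Set.mem_setOf_eq]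

@[simp] lemma mem_Pf {x : M p} :
    x ∈ (Pf : Submodule (ZMod p) (M p)) ↔ x.1 = 0 := Iff.rfl

variable (p) in
/-- Index type for the classification of right ideals. -/
def Idx := (ZMod p × ZMod p) ⊕ ((ZMod p × ZMod p) ⊕ (ZMod p ⊕ (ZMod p ⊕ (ZMod p ⊕
    (Unit ⊕ (Unit ⊕ (Unit ⊕ (Unit ⊕ Unit))))))))

def F : Idx p → Submodule (ZMod p) (M p)
  | .inl (a, b) => L1 a b
  | .inr (.inl (a, b)) => P1 a b
  | .inr (.inr (.inl b)) => L2 b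
  | .inr (.inr (.inr (.inl a))) => P2 a
  | .inr (.inr (.inr (.inr (.inl s)))) => Q s
  | .inr (.inr (.inr (.inr (.inr (.inl _))))) => ⊥
  | .inr (.inr (.inr (.inr (.inr (.inr (.inl _)))))) => L3
  | .inr (.inr (.inr (.inr (.inr (.inr (.inr (.inl _))))))) => P3
  | .inr (.inr (.inr (.inr (.inr (.inr (.inr (.inr (.inl _)))))))) => Pf
  | .inr (.inr (.inr (.inr (.inr (.inr (.inr (.inr (.inr _)))))))) => ⊤

lemma F_ideal (i : Idx p) : ∀ g x, x ∈ F i → mulA x g ∈ F i := by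
  rcases i with ⟨a,b⟩ | ⟨⟨a,b⟩ | b | a | s | u | u | u | u | u⟩ <;>
    rintro ⟨g1,g2,g3,g4⟩ ⟨r,s',t,u'⟩ hx <;>
    simp_all [F, mulA]

lemma F_inj : Function.Injective (F (p := p)) := by
  intro i j h
  have H := SetLike.ext_iff.mp h
  clear h
  rcases i with ⟨a,b⟩ | ⟨⟨a,b⟩ | b | a | s | u | u | u | u | u⟩ <;>
    rcases j with ⟨a',b'⟩ | ⟨⟨a',b'⟩ | b' | a' | s' | u' | u' | u' | u' | u'⟩ <;>
    simp only [F] at H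
  · -- L1 = L1
    have h0 := (H (0,1,a,b)).mp (by simp)
    simp only [mem_L1, mul_one, mul_zero, add_zero, zero_add] at h0
    obtain ⟨-, rfl, rfl⟩ := h0
    rfl
  · -- L1 vs P1
    exact absurd ((H (0,0,1,b')).mpr (by simp)) (by simp)
  · -- L1 vs L2
    exact absurd ((H (0,1,a,b)).mp (by simp)) (by simp)
  · -- L1 vs P2
    exact absurd ((H (0,0,0,1)).mpr (by simp)) (by simp)
  · -- L1 vs Q
    exact absurd ((H (0,0,1,0)).mpr (by simp)) (by simp)
  · -- L1 vs B
    exact absurd ((H (0,1,a,b)).mp (by simp)) (by simp)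
  · -- L1 vs L3
    exact absurd ((H (0,1,a,b)).mp (by simp)) (by simp)
  · -- L1 vs P3
    exact absurd ((H (0,1,a,b)).mp (by simp)) (by simp)
  · -- L1 vs Pf
    exact absurd ((H (0,0,1,0)).mpr (by simp)) (by simp)
  · -- L1 vs T
    exact absurd ((H (1,0,0,0)).mpr (by simp)) (by simp)
  · -- P1 vs L1
    exact absurd ((H (0,0,1,b)).mp (by simp)) (by simp)
  · -- P1 = P1
    have h0 := (H (0,1,0,a)).mp (by simp)
    simp only [mem_P1, mul_one, mul_zero, add_zero, zero_add] at h0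
    have h1 := (H (0,0,1,b)).mp (by simp)
    simp only [mem_P1, mul_one, mul_zero, add_zero, zero_add] at h1
    obtain ⟨-, rfl⟩ := h0
    obtain ⟨-, rfl⟩ := h1
    rfl
  · -- P1 vs L2
    exact absurd ((H (0,1,0,a)).mp (by simp)) (by simp)
  · -- P1 vs P2
    exact absurd ((H (0,0,0,1)).mpr (by simp)) (by simp)
  · -- P1 vs Q
    exact absurd ((H (0,0,0,1)).mpr (by simp)) (by simp)
  · -- P1 vs B
    exact absurd ((H (0,1,0,a)).mp (by simp)) (by simp)
  · -- P1 vs L3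
    exact absurd ((H (0,1,0,a)).mp (by simp)) (by simp)
  · -- P1 vs P3
    exact absurd ((H (0,1,0,a)).mp (by simp)) (by simp)
  · -- P1 vs Pf
    exact absurd ((H (0,0,0,1)).mpr (by simp)) (by simp)
  · -- P1 vs T
    exact absurd ((H (1,0,0,0)).mpr (by simp)) (by simp)
  · -- L2 vs L1
    exact absurd ((H (0,1,a',b')).mpr (by simp)) (by simp)
  · -- L2 vs P1
    exact absurd ((H (0,1,0,a')).mpr (by simp)) (by simp)
  · -- L2 = L2
    have h0 := (H (0,0,1,b)).mp (by simp)
    simp only [mem_L2, mul_one, mul_zero, add_zero, zero_add] at h0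
    obtain ⟨-, -, rfl⟩ := h0
    rfl
  · -- L2 vs P2
    exact absurd ((H (0,1,a',0)).mpr (by simp)) (by simp)
  · -- L2 vs Q
    exact absurd ((H (0,0,0,1)).mpr (by simp)) (by simp)
  · -- L2 vs B
    exact absurd ((H (0,0,1,b)).mp (by simp)) (by simp)
  · -- L2 vs L3
    exact absurd ((H (0,0,1,b)).mp (by simp)) (by simp)
  · -- L2 vs P3
    exact absurd ((H (0,0,0,1)).mpr (by simp)) (by simp)
  · -- L2 vs Pf
    exact absurd ((H (0,1,0,0)).mpr (by simp)) (by simp)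
  · -- L2 vs T
    exact absurd ((H (1,0,0,0)).mpr (by simp)) (by simp)
  · -- P2 vs L1
    exact absurd ((H (0,0,0,1)).mp (by simp)) (by simp)
  · -- P2 vs P1
    exact absurd ((H (0,0,0,1)).mp (by simp)) (by simp)
  · -- P2 vs L2
    exact absurd ((H (0,1,a,0)).mp (by simp)) (by simp)
  · -- P2 = P2
    have h0 := (H (0,1,a,0)).mp (by simp)
    simp only [mem_P2, mul_one, mul_zero, add_zero, zero_add] at h0
    obtain ⟨-, rfl⟩ := h0
    rfl
  · -- P2 vs Q
    exact absurd ((H (0,1,a,0)).mp (by simp)) (by simp)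
  · -- P2 vs B
    exact absurd ((H (0,1,a,0)).mp (by simp)) (by simp)
  · -- P2 vs L3
    exact absurd ((H (0,1,a,0)).mp (by simp)) (by simp)
  · -- P2 vs P3
    exact absurd ((H (0,1,a,0)).mp (by simp)) (by simp)
  · -- P2 vs Pf
    exact absurd ((H (0,0,1,0)).mpr (by simp)) (by simp)
  · -- P2 vs T
    exact absurd ((H (1,0,0,0)).mpr (by simp)) (by simp)
  · -- Q vs L1
    exact absurd ((H (0,0,1,0)).mp (by simp)) (by simp)
  · -- Q vs P1
    exact absurd ((H (0,0,0,1)).mp (by simp)) (by simp)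
  · -- Q vs L2
    exact absurd ((H (0,0,0,1)).mp (by simp)) (by simp)
  · -- Q vs P2
    exact absurd ((H (0,1,a',0)).mpr (by simp)) (by simp)
  · -- Q = Q
    have h0 := (H (1,s,0,0)).mp (by simp)
    simp only [mem_Q, mul_one, mul_zero, add_zero, zero_add] at h0
    obtain rfl := h0
    rfl
  · -- Q vs B
    exact absurd ((H (1,s,0,0)).mp (by simp)) (by simp)
  · -- Q vs L3
    exact absurd ((H (1,s,0,0)).mp (by simp)) (by simp)
  · -- Q vs P3
    exact absurd ((H (1,s,0,0)).mp (by simp)) (by simp)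
  · -- Q vs Pf
    exact absurd ((H (1,s,0,0)).mp (by simp)) (by simp)
  · -- Q vs T
    exact absurd ((H (0,1,0,0)).mpr (by simp)) (by simp)
  · -- B vs L1
    exact absurd ((H (0,1,a',b')).mpr (by simp)) (by simp)
  · -- B vs P1
    exact absurd ((H (0,1,0,a')).mpr (by simp)) (by simp)
  · -- B vs L2
    exact absurd ((H (0,0,1,b')).mpr (by simp)) (by simp)
  · -- B vs P2
    exact absurd ((H (0,1,a',0)).mpr (by simp)) (by simp)
  · -- B vs Q
    exact absurd ((H (1,s',0,0)).mpr (by simp)) (by simp)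
  · rfl -- B
  · -- B vs L3
    exact absurd ((H (0,0,0,1)).mpr (by simp)) (by simp)
  · -- B vs P3
    exact absurd ((H (0,0,0,1)).mpr (by simp)) (by simp)
  · -- B vs Pf
    exact absurd ((H (0,0,0,1)).mpr (by simp)) (by simp)
  · -- B vs T
    exact absurd ((H (0,0,0,1)).mpr (by simp)) (by simp)
  · -- L3 vs L1
    exact absurd ((H (0,1,a',b')).mpr (by simp)) (by simp)
  · -- L3 vs P1
    exact absurd ((H (0,1,0,a')).mpr (by simp)) (by simp)
  · -- L3 vs L2
    exact absurd ((H (0,0,1,b')).mpr (by simp)) (by simp)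
  · -- L3 vs P2
    exact absurd ((H (0,1,a',0)).mpr (by simp)) (by simp)
  · -- L3 vs Q
    exact absurd ((H (1,s',0,0)).mpr (by simp)) (by simp)
  · -- L3 vs B
    exact absurd ((H (0,0,0,1)).mp (by simp)) (by simp)
  · rfl -- L3
  · -- L3 vs P3
    exact absurd ((H (0,0,1,0)).mpr (by simp)) (by simp)
  · -- L3 vs Pf
    exact absurd ((H (0,0,1,0)).mpr (by simp)) (by simp)
  · -- L3 vs T
    exact absurd ((H (0,0,1,0)).mpr (by simp)) (by simp)
  · -- P3 vs L1
    exact absurd ((H (0,1,a',b')).mpr (by simp)) (by simp)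
  · -- P3 vs P1
    exact absurd ((H (0,1,0,a')).mpr (by simp)) (by simp)
  · -- P3 vs L2
    exact absurd ((H (0,0,0,1)).mp (by simp)) (by simp)
  · -- P3 vs P2
    exact absurd ((H (0,1,a',0)).mpr (by simp)) (by simp)
  · -- P3 vs Q
    exact absurd ((H (1,s',0,0)).mpr (by simp)) (by simp)
  · -- P3 vs B
    exact absurd ((H (0,0,0,1)).mp (by simp)) (by simp)
  · -- P3 vs L3
    exact absurd ((H (0,0,1,0)).mp (by simp)) (by simp)
  · rfl -- P3
  · -- P3 vs Pf
    exact absurd ((H (0,1,0,0)).mpr (by simp)) (by simp)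
  · -- P3 vs T
    exact absurd ((H (0,1,0,0)).mpr (by simp)) (by simp)
  · -- Pf vs L1
    exact absurd ((H (0,0,1,0)).mp (by simp)) (by simp)
  · -- Pf vs P1
    exact absurd ((H (0,0,0,1)).mp (by simp)) (by simp)
  · -- Pf vs L2
    exact absurd ((H (0,1,0,0)).mp (by simp)) (by simp)
  · -- Pf vs P2
    exact absurd ((H (0,0,1,0)).mp (by simp)) (by simp)
  · -- Pf vs Q
    exact absurd ((H (1,s',0,0)).mpr (by simp)) (by simp)
  · -- Pf vs B
    exact absurd ((H (0,0,0,1)).mp (by simp)) (by simp)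
  · -- Pf vs L3
    exact absurd ((H (0,0,1,0)).mp (by simp)) (by simp)
  · -- Pf vs P3
    exact absurd ((H (0,1,0,0)).mp (by simp)) (by simp)
  · rfl -- Pf
  · -- Pf vs T
    exact absurd ((H (1,0,0,0)).mpr (by simp)) (by simp)
  · -- T vs L1
    exact absurd ((H (1,0,0,0)).mp (by simp)) (by simp)
  · -- T vs P1
    exact absurd ((H (1,0,0,0)).mp (by simp)) (by simp)
  · -- T vs L2
    exact absurd ((H (1,0,0,0)).mp (by simp)) (by simp)
  · -- T vs P2
    exact absurd ((H (1,0,0,0)).mp (by simp)) (by simp)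
  · -- T vs Q
    exact absurd ((H (0,1,0,0)).mp (by simp)) (by simp)
  · -- T vs B
    exact absurd ((H (0,0,0,1)).mp (by simp)) (by simp)
  · -- T vs L3
    exact absurd ((H (0,0,1,0)).mp (by simp)) (by simp)
  · -- T vs P3
    exact absurd ((H (0,1,0,0)).mp (by simp)) (by simp)
  · -- T vs Pf
    exact absurd ((H (1,0,0,0)).mp (by simp)) (by simp)
  · rfl -- T
lemma quad_eq {x y : M p} (h1 : x.1 = y.1) (h2 : x.2.1 = y.2.1)
    (h3 : x.2.2.1 = y.2.2.1) (h4 : x.2.2.2 = y.2.2.2) : x = y := by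
  simp only [Prod.ext_iff]
  exact ⟨h1, h2, h3, h4⟩

lemma F_surj (J : Submodule (ZMod p) (M p)) (hJ : ∀ g x, x ∈ J → mulA x g ∈ J) :
    ∃ i : Idx p, F i = J := by
  classical
  by_cases hA : ∃ x ∈ J, x.1 ≠ 0
  · -- there is an element with nonzero a-coordinate
    obtain ⟨⟨r, s, t, u⟩, hx, hr⟩ := hA
    simp only at hr
    have hcJ : ((0,0,1,0) : M p) ∈ J := by
      have := hJ (r⁻¹, 0, 0, 0) _ hx
      simpa [mulA, mul_inv_cancel₀ hr] using this
    have hdJ : ((0,0,0,1) : M p) ∈ J := by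
      have := hJ (0, r⁻¹, 0, 0) _ hx
      simpa [mulA, mul_inv_cancel₀ hr] using this
    set σ : ZMod p := r⁻¹ * s with hσ
    have heJ : ((1, σ, 0, 0) : M p) ∈ J := by
      have h1 := sub_mem (sub_mem (J.smul_mem r⁻¹ hx) (J.smul_mem (r⁻¹*t) hcJ))
        (J.smul_mem (r⁻¹*u) hdJ)
      have he : ((1, σ, 0, 0) : M p)
          = r⁻¹ • ((r,s,t,u) : M p) - (r⁻¹*t) • ((0,0,1,0) : M p)
            - (r⁻¹*u) • ((0,0,0,1) : M p) := by
        refine quad_eq ?_ ?_ ?_ ?_ <;>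
          simp [inv_mul_cancel₀ hr, hσ]
      rw [he]; exact h1
    by_cases hB : ∃ y ∈ J, y.2.1 ≠ σ * y.1
    · -- J = ⊤
      obtain ⟨⟨r2, s2, t2, u2⟩, hy, hs2⟩ := hB
      simp only at hs2
      have hν : s2 - σ * r2 ≠ 0 := sub_ne_zero_of_ne hs2
      have hbJ : ((0,1,0,0) : M p) ∈ J := by
        have h1 := J.smul_mem (s2 - σ*r2)⁻¹ (sub_mem (sub_mem (sub_mem hy
          (J.smul_mem r2 heJ)) (J.smul_mem t2 hcJ)) (J.smul_mem u2 hdJ))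
        have he : ((0,1,0,0) : M p)
            = (s2 - σ*r2)⁻¹ • (((r2,s2,t2,u2) : M p) - r2 • ((1,σ,0,0) : M p)
              - t2 • ((0,0,1,0) : M p) - u2 • ((0,0,0,1) : M p)) := by
          refine quad_eq ?_ ?_ ?_ ?_ <;> simp
          rw [show s2 - r2 * σ = s2 - σ * r2 by ring, inv_mul_cancel₀ hν]
        rw [he]; exact h1
      have haJ : ((1,0,0,0) : M p) ∈ J := by
        have h1 := sub_mem heJ (J.smul_mem σ hbJ)
        have he : ((1,0,0,0) : M p) = ((1,σ,0,0) : M p) - σ • ((0,1,0,0) : M p) := by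
          refine quad_eq ?_ ?_ ?_ ?_ <;> simp
        rw [he]; exact h1
      refine ⟨.inr (.inr (.inr (.inr (.inr (.inr (.inr (.inr (.inr ())))))))), ?_⟩
      simp only [F]
      refine le_antisymm ?_ le_top
      rintro ⟨r3, s3, t3, u3⟩ -
      have he : ((r3,s3,t3,u3) : M p)
          = r3 • ((1,0,0,0) : M p) + s3 • ((0,1,0,0) : M p)
            + t3 • ((0,0,1,0) : M p) + u3 • ((0,0,0,1) : M p) := by
        refine quad_eq ?_ ?_ ?_ ?_ <;> simp
      rw [he]
      exact add_mem (add_mem (add_mem (J.smul_mem _ haJ) (J.smul_mem _ hbJ))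
        (J.smul_mem _ hcJ)) (J.smul_mem _ hdJ)
    · -- J = Q σ
      push_neg at hB
      refine ⟨.inr (.inr (.inr (.inr (.inl σ)))), ?_⟩
      simp only [F]
      refine le_antisymm ?_ ?_
      · rintro ⟨r3, s3, t3, u3⟩ hx3
        rw [mem_Q] at hx3
        simp only at hx3
        have he : ((r3,s3,t3,u3) : M p)
            = r3 • ((1,σ,0,0) : M p) + t3 • ((0,0,1,0) : M p)
              + u3 • ((0,0,0,1) : M p) := by
          refine quad_eq ?_ ?_ ?_ ?_ <;> simp [hx3, mul_comm]
        rw [he]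
        exact add_mem (add_mem (J.smul_mem _ heJ) (J.smul_mem _ hcJ)) (J.smul_mem _ hdJ)
      · intro y hy
        exact hB y hy
  · -- all elements have a-coordinate 0
    push_neg at hA
    by_cases hs : ∃ y ∈ J, y.2.1 ≠ 0
    · obtain ⟨⟨r2, s2, t2, u2⟩, hy, hs2⟩ := hs
      simp only at hs2
      obtain rfl : r2 = 0 := hA _ hy
      obtain ⟨t0, ht0⟩ : ∃ a : ZMod p, a = s2⁻¹ * t2 := ⟨_, rfl⟩
      obtain ⟨u0, hu0⟩ : ∃ a : ZMod p, a = s2⁻¹ * u2 := ⟨_, rfl⟩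
      have hwJ : ((0, 1, t0, u0) : M p) ∈ J := by
        have h1 := J.smul_mem s2⁻¹ hy
        have he : ((0, 1, t0, u0) : M p) = s2⁻¹ • ((0,s2,t2,u2) : M p) := by
          refine quad_eq ?_ ?_ ?_ ?_ <;> simp [ht0, hu0, inv_mul_cancel₀ hs2]
        rw [he]; exact h1
      by_cases ht : ∃ z ∈ J, z.2.2.1 ≠ t0 * z.2.1
      · obtain ⟨⟨r3, s3, t3, u3⟩, hz, ht3⟩ := ht
        simp only at ht3
        obtain rfl : r3 = 0 := hA _ hz
        have hμ : t3 - t0 * s3 ≠ 0 := sub_ne_zero_of_ne ht3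
        obtain ⟨u1, hu1⟩ : ∃ a : ZMod p, a = (t3 - t0*s3)⁻¹ * (u3 - s3 * u0) := ⟨_, rfl⟩
        have hres : ((0, 0, t3 - t0*s3, u3 - s3*u0) : M p) ∈ J := by
          have h1 := sub_mem hz (J.smul_mem s3 hwJ)
          have he : ((0, 0, t3 - t0*s3, u3 - s3*u0) : M p)
              = ((0,s3,t3,u3) : M p) - s3 • ((0,1,t0,u0) : M p) := by
            refine quad_eq ?_ ?_ ?_ ?_ <;> simp <;> ring
          rw [he]; exact h1
        have hvJ : ((0, 0, 1, u1) : M p) ∈ J := by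
          have h1 := J.smul_mem (t3 - t0*s3)⁻¹ hres
          have he : ((0, 0, 1, u1) : M p)
              = (t3 - t0*s3)⁻¹ • ((0, 0, t3 - t0*s3, u3 - s3*u0) : M p) := by
            refine quad_eq ?_ ?_ ?_ ?_ <;> simp [hu1, inv_mul_cancel₀ hμ]
          rw [he]; exact h1
        by_cases hu : ∃ q ∈ J, q.2.2.2 ≠ (u0 - u1*t0) * q.2.1 + u1 * q.2.2.1
        · -- J = Pf
          obtain ⟨⟨r4, s4, t4, u4⟩, hq, hu4⟩ := hu
          simp only at hu4
          obtain rfl : r4 = 0 := hA _ hq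
          have hδ : u4 - s4 * u0 - (t4 - t0*s4) * u1 ≠ 0 := by
            intro h
            apply hu4
            linear_combination h
          have hdJ : ((0,0,0,1) : M p) ∈ J := by
            have hres : ((0, 0, 0, u4 - s4*u0 - (t4 - t0*s4)*u1) : M p) ∈ J := by
              have h1 := sub_mem (sub_mem hq (J.smul_mem s4 hwJ))
                (J.smul_mem (t4 - t0*s4) hvJ)
              have he : ((0, 0, 0, u4 - s4*u0 - (t4 - t0*s4)*u1) : M p)
                  = ((0,s4,t4,u4) : M p) - s4 • ((0,1,t0,u0) : M p)
                    - (t4 - t0*s4) • ((0,0,1,u1) : M p) := by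
                refine quad_eq ?_ ?_ ?_ ?_ <;> simp <;> ring
              rw [he]; exact h1
            have h1 := J.smul_mem (u4 - s4*u0 - (t4 - t0*s4)*u1)⁻¹ hres
            have he : ((0,0,0,1) : M p)
                = (u4 - s4*u0 - (t4 - t0*s4)*u1)⁻¹ •
                  ((0, 0, 0, u4 - s4*u0 - (t4 - t0*s4)*u1) : M p) := by
              refine quad_eq ?_ ?_ ?_ ?_ <;> simp [inv_mul_cancel₀ hδ]
            rw [he]; exact h1
          refine ⟨.inr (.inr (.inr (.inr (.inr (.inr (.inr (.inr (.inl ())))))))), ?_⟩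
          simp only [F]
          refine le_antisymm ?_ ?_
          · rintro ⟨r5, s5, t5, u5⟩ hx5
            rw [mem_Pf] at hx5
            simp only at hx5
            subst hx5
            have he : ((0,s5,t5,u5) : M p)
                = s5 • ((0,1,t0,u0) : M p) + (t5 - t0*s5) • ((0,0,1,u1) : M p)
                  + (u5 - s5*u0 - (t5 - t0*s5)*u1) • ((0,0,0,1) : M p) := by
              refine quad_eq ?_ ?_ ?_ ?_ <;> simp <;> ring
            rw [he]
            exact add_mem (add_mem (J.smul_mem _ hwJ) (J.smul_mem _ hvJ)) (J.smul_mem _ hdJ)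
          · intro y hy2
            rw [mem_Pf]
            exact hA _ hy2
        · -- J = P1 (u0 - u1*t0) u1
          push_neg at hu
          refine ⟨.inr (.inl (u0 - u1*t0, u1)), ?_⟩
          simp only [F]
          refine le_antisymm ?_ ?_
          · rintro ⟨r5, s5, t5, u5⟩ hx5
            rw [mem_P1] at hx5
            obtain ⟨hx51, hx52⟩ := hx5
            simp only at hx51 hx52
            subst hx51
            have he : ((0,s5,t5,u5) : M p)
                = s5 • ((0,1,t0,u0) : M p) + (t5 - t0*s5) • ((0,0,1,u1) : M p) := by
              refine quad_eq ?_ ?_ ?_ ?_ <;> simp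
              · ring
              · linear_combination hx52
            rw [he]
            exact add_mem (J.smul_mem _ hwJ) (J.smul_mem _ hvJ)
          · intro y hy2
            rw [mem_P1]
            exact ⟨hA _ hy2, hu y hy2⟩
      · push_neg at ht
        by_cases hu2 : ∃ q ∈ J, q.2.2.2 ≠ u0 * q.2.1
        · -- J = P2 t0
          obtain ⟨⟨r4, s4, t4, u4⟩, hq, hu4⟩ := hu2
          simp only at hu4
          obtain rfl : r4 = 0 := hA _ hq
          have ht4 : t4 = t0 * s4 := ht _ hq
          have hδ : u4 - s4 * u0 ≠ 0 := by
            intro h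
            apply hu4
            linear_combination h
          have hdJ : ((0,0,0,1) : M p) ∈ J := by
            have hres : ((0, 0, 0, u4 - s4*u0) : M p) ∈ J := by
              have h1 := sub_mem hq (J.smul_mem s4 hwJ)
              have he : ((0, 0, 0, u4 - s4*u0) : M p)
                  = ((0,s4,t4,u4) : M p) - s4 • ((0,1,t0,u0) : M p) := by
                refine quad_eq ?_ ?_ ?_ ?_ <;> simp [ht4] <;> ring
              rw [he]; exact h1
            have h1 := J.smul_mem (u4 - s4*u0)⁻¹ hres
            have he : ((0,0,0,1) : M p)
                = (u4 - s4*u0)⁻¹ • ((0, 0, 0, u4 - s4*u0) : M p) := by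
              refine quad_eq ?_ ?_ ?_ ?_ <;> simp [inv_mul_cancel₀ hδ]
            rw [he]; exact h1
          refine ⟨.inr (.inr (.inr (.inl t0))), ?_⟩
          simp only [F]
          refine le_antisymm ?_ ?_
          · rintro ⟨r5, s5, t5, u5⟩ hx5
            rw [mem_P2] at hx5
            obtain ⟨hx51, hx52⟩ := hx5
            simp only at hx51 hx52
            subst hx51
            have he : ((0,s5,t5,u5) : M p)
                = s5 • ((0,1,t0,u0) : M p) + (u5 - s5*u0) • ((0,0,0,1) : M p) :=
              quad_eq (by simp) (by simp) (by simp <;> linear_combination hx52)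
                (by simp <;> ring)
            rw [he]
            exact add_mem (J.smul_mem _ hwJ) (J.smul_mem _ hdJ)
          · intro y hy2
            rw [mem_P2]
            exact ⟨hA _ hy2, ht y hy2⟩
        · -- J = L1 t0 u0
          push_neg at hu2
          refine ⟨.inl (t0, u0), ?_⟩
          simp only [F]
          refine le_antisymm ?_ ?_
          · rintro ⟨r5, s5, t5, u5⟩ hx5
            rw [mem_L1] at hx5
            obtain ⟨hx51, hx52, hx53⟩ := hx5
            simp only at hx51 hx52 hx53
            subst hx51
            have he : ((0,s5,t5,u5) : M p) = s5 • ((0,1,t0,u0) : M p) := by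
              refine quad_eq ?_ ?_ ?_ ?_ <;> simp
              · linear_combination hx52
              · linear_combination hx53
            rw [he]
            exact J.smul_mem _ hwJ
          · intro y hy2
            rw [mem_L1]
            exact ⟨hA _ hy2, ht y hy2, hu2 y hy2⟩
    · push_neg at hs
      by_cases ht2 : ∃ z ∈ J, z.2.2.1 ≠ 0
      · obtain ⟨⟨r3, s3, t3, u3⟩, hz, ht3⟩ := ht2
        simp only at ht3
        obtain rfl : r3 = 0 := hA _ hz
        obtain rfl : s3 = 0 := hs _ hz
        obtain ⟨u1, hu1⟩ : ∃ a : ZMod p, a = t3⁻¹ * u3 := ⟨_, rfl⟩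
        have hvJ : ((0,0,1,u1) : M p) ∈ J := by
          have h1 := J.smul_mem t3⁻¹ hz
          have he : ((0,0,1,u1) : M p) = t3⁻¹ • ((0,0,t3,u3) : M p) := by
            refine quad_eq ?_ ?_ ?_ ?_ <;> simp [hu1, inv_mul_cancel₀ ht3]
          rw [he]; exact h1
        by_cases hu3 : ∃ q ∈ J, q.2.2.2 ≠ u1 * q.2.2.1
        · -- J = P3
          obtain ⟨⟨r4, s4, t4, u4⟩, hq, hu4⟩ := hu3
          simp only at hu4
          obtain rfl : r4 = 0 := hA _ hq
          obtain rfl : s4 = 0 := hs _ hq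
          have hδ : u4 - t4 * u1 ≠ 0 := by
            intro h
            apply hu4
            linear_combination h
          have hdJ : ((0,0,0,1) : M p) ∈ J := by
            have hres : ((0, 0, 0, u4 - t4*u1) : M p) ∈ J := by
              have h1 := sub_mem hq (J.smul_mem t4 hvJ)
              have he : ((0, 0, 0, u4 - t4*u1) : M p)
                  = ((0,0,t4,u4) : M p) - t4 • ((0,0,1,u1) : M p) := by
                refine quad_eq ?_ ?_ ?_ ?_ <;> simp <;> ring
              rw [he]; exact h1
            have h1 := J.smul_mem (u4 - t4*u1)⁻¹ hres
            have he : ((0,0,0,1) : M p)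
                = (u4 - t4*u1)⁻¹ • ((0, 0, 0, u4 - t4*u1) : M p) := by
              refine quad_eq ?_ ?_ ?_ ?_ <;> simp [inv_mul_cancel₀ hδ]
            rw [he]; exact h1
          refine ⟨.inr (.inr (.inr (.inr (.inr (.inr (.inr (.inl ()))))))), ?_⟩
          simp only [F]
          refine le_antisymm ?_ ?_
          · rintro ⟨r5, s5, t5, u5⟩ hx5
            rw [mem_P3] at hx5
            obtain ⟨hx51, hx52⟩ := hx5
            simp only at hx51 hx52
            subst hx51; subst hx52
            have he : ((0,0,t5,u5) : M p)
                = t5 • ((0,0,1,u1) : M p) + (u5 - t5*u1) • ((0,0,0,1) : M p) :=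
              quad_eq (by simp) (by simp) (by simp) (by simp <;> ring)
            rw [he]
            exact add_mem (J.smul_mem _ hvJ) (J.smul_mem _ hdJ)
          · intro y hy2
            rw [mem_P3]
            exact ⟨hA _ hy2, hs _ hy2⟩
        · -- J = L2 u1
          push_neg at hu3
          refine ⟨.inr (.inr (.inl u1)), ?_⟩
          simp only [F]
          refine le_antisymm ?_ ?_
          · rintro ⟨r5, s5, t5, u5⟩ hx5
            rw [mem_L2] at hx5
            obtain ⟨hx51, hx52, hx53⟩ := hx5
            simp only at hx51 hx52 hx53
            subst hx51; subst hx52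
            have he : ((0,0,t5,u5) : M p) = t5 • ((0,0,1,u1) : M p) := by
              refine quad_eq ?_ ?_ ?_ ?_ <;> simp
              linear_combination hx53
            rw [he]
            exact J.smul_mem _ hvJ
          · intro y hy2
            rw [mem_L2]
            exact ⟨hA _ hy2, hs _ hy2, hu3 y hy2⟩
      · push_neg at ht2
        by_cases hu4 : ∃ q ∈ J, q.2.2.2 ≠ 0
        · -- J = L3
          obtain ⟨⟨r4, s4, t4, u4⟩, hq, hu44⟩ := hu4
          simp only at hu44
          obtain rfl : r4 = 0 := hA _ hq
          obtain rfl : s4 = 0 := hs _ hq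
          obtain rfl : t4 = 0 := ht2 _ hq
          have hdJ : ((0,0,0,1) : M p) ∈ J := by
            have h1 := J.smul_mem u4⁻¹ hq
            have he : ((0,0,0,1) : M p) = u4⁻¹ • ((0,0,0,u4) : M p) := by
              refine quad_eq ?_ ?_ ?_ ?_ <;> simp [inv_mul_cancel₀ hu44]
            rw [he]; exact h1
          refine ⟨.inr (.inr (.inr (.inr (.inr (.inr (.inl ())))))), ?_⟩
          simp only [F]
          refine le_antisymm ?_ ?_
          · rintro ⟨r5, s5, t5, u5⟩ hx5
            rw [mem_L3] at hx5
            obtain ⟨hx51, hx52, hx53⟩ := hx5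
            simp only at hx51 hx52 hx53
            subst hx51; subst hx52; subst hx53
            have he : ((0,0,0,u5) : M p) = u5 • ((0,0,0,1) : M p) := by
              refine quad_eq ?_ ?_ ?_ ?_ <;> simp
            rw [he]
            exact J.smul_mem _ hdJ
          · intro y hy2
            rw [mem_L3]
            exact ⟨hA _ hy2, hs _ hy2, ht2 _ hy2⟩
        · -- J = ⊥
          push_neg at hu4
          refine ⟨.inr (.inr (.inr (.inr (.inr (.inl ()))))), ?_⟩
          simp only [F]
          refine le_antisymm bot_le ?_
          rintro ⟨r5, s5, t5, u5⟩ hx5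
          rw [Submodule.mem_bot]
          refine quad_eq ?_ ?_ ?_ ?_ <;> simp
          · exact hA _ hx5
          · exact hs _ hx5
          · exact ht2 _ hx5
          · exact hu4 _ hx5
end Stmt5

/-- The number of right ideals of `A` (`F_p`-subspaces `J` with `J·A ⊆ J`),
including `0` and `A`, is `p² + 3p + 5`. -/
theorem stmt5 (p : ℕ) [Fact p.Prime] (hp2 : 2 < p) :
    Nat.card {J : Submodule (ZMod p) (ZMod p × ZMod p × ZMod p × ZMod p) //
      ∀ g x, x ∈ J → mulA x g ∈ J} = 2 * p ^ 2 + 3 * p + 5 := by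
  have hbij : Function.Bijective
      (fun i : Stmt5.Idx p => (⟨Stmt5.F i, Stmt5.F_ideal i⟩ :
        {J : Submodule (ZMod p) (ZMod p × ZMod p × ZMod p × ZMod p) //
          ∀ g x, x ∈ J → mulA x g ∈ J})) := by
    constructor
    · intro i j h
      exact Stmt5.F_inj (congrArg Subtype.val h)
    · rintro ⟨J, hJ⟩
      obtain ⟨i, hi⟩ := Stmt5.F_surj J hJ
      exact ⟨i, Subtype.ext hi⟩
  rw [← Nat.card_congr (Equiv.ofBijective _ hbij)]
  simp only [Stmt5.Idx, Nat.card_sum, Nat.card_prod, Nat.card_zmod, Nat.card_unique]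
  ring
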